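/- Let (K,v) be a henselian valued field of residue characteristic p > 0, let t ∈ O_v be such that the residue t̄ is not a p-th power in Kv. If a ∈ K satisfies v(a) > 0, then there is no field extension L of K with [L:K] < p containing an element y with y^p − a·y = t. -/

import Mathlib

open scoped IntermediateField
set_option maxHeartbeats 2000000
set_option synthInstance.maxHeartbeats 1000000


/-- Let (K,v) be a henselian valued field of residue characteristic p > 0, let t ∈ O_v be
such that the residue t̄ is not a p-th power in the residue field Kv.  If a ∈ K satisfies
v(a) > 0, then there is no field extension L of K with [L:K] < p containing an element y
with y^p − a·y = t.

Multiplicatively, v(a) > 0 is `O.valuation a < 1`.  Any extension L as above is algebraic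
over K, so extensions are taken inside a fixed algebraic closure. -/
theorem no_root_in_small_extension
    (K : Type*) [Field K] (O : ValuationSubring K) [HenselianLocalRing ↥O]
    (p : ℕ) [Fact p.Prime] [CharP (IsLocalRing.ResidueField ↥O) p]
    (t : K) (ht : t ∈ O)
    (htp : ∀ s : IsLocalRing.ResidueField ↥O,
      s ^ p ≠ IsLocalRing.residue ↥O ⟨t, ht⟩)
    (a : K) (ha : O.valuation a < 1) :
    ¬ ∃ L : IntermediateField K (AlgebraicClosure K), FiniteDimensional K ↥L ∧
        Module.finrank K ↥L < p ∧
        ∃ y : ↥L, y ^ p - (algebraMap K ↥L a) * y = algebraMap K ↥L t := by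
  classical
  rintro ⟨L, hfin, hdim, y, hy⟩
  have hp : p.Prime := Fact.out
  set k := IsLocalRing.ResidueField ↥O with hk
  set ρ : ↥O →+* k := IsLocalRing.residue ↥O with hρ
  have haO : a ∈ O := O.mem_of_valuation_le_one a ha.le
  set A := AlgebraicClosure K with hA
  set y' : A := (y : A) with hy'def
  have hy' : y' ^ p - algebraMap K A a * y' = algebraMap K A t := by
    have h := congrArg L.val hy
    rw [map_sub, map_pow, map_mul, AlgHom.commutes, AlgHom.commutes] at h
    exact h
  set F : Polynomial ↥O :=
    Polynomial.X ^ p - Polynomial.C ⟨a, haO⟩ * Polynomial.X - Polynomial.C ⟨t, ht⟩ with hF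
  have hppos : 0 < p := hp.pos
  have hp2 : 2 ≤ p := hp.two_le
  have hFmonic : F.Monic := by
    have h1 : (Polynomial.C (⟨a, haO⟩ : ↥O) * Polynomial.X + Polynomial.C (⟨t, ht⟩ : ↥O)).degree
        < (p : WithBot ℕ) := by
      refine lt_of_le_of_lt Polynomial.degree_linear_le ?_
      exact_mod_cast (by omega : (1:ℕ) < p)
    have heqF : F = Polynomial.X ^ p -
        (Polynomial.C (⟨a, haO⟩ : ↥O) * Polynomial.X + Polynomial.C ⟨t, ht⟩) := by
      rw [hF]; ring
    rw [heqF]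
    exact Polynomial.monic_X_pow_sub h1
  have hmapa : algebraMap ↥O A ⟨a, haO⟩ = algebraMap K A a := by
    rw [IsScalarTower.algebraMap_apply ↥O K A]; rfl
  have hmapt : algebraMap ↥O A ⟨t, ht⟩ = algebraMap K A t := by
    rw [IsScalarTower.algebraMap_apply ↥O K A]; rfl
  have hFroot : Polynomial.aeval y' F = 0 := by
    simp only [hF, map_sub, map_mul, map_pow, Polynomial.aeval_X, Polynomial.aeval_C,
      hmapa, hmapt]
    rw [sub_sub, ← hy']
    ring
  haveI : NoZeroSMulDivisors ↥O A := by
    suffices hinj : Function.Injective (algebraMap ↥O A) from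
      ⟨fun {c x} h => by rwa [Algebra.smul_def, mul_eq_zero, map_eq_zero_iff _ hinj] at h⟩
    rw [IsScalarTower.algebraMap_eq ↥O K A]
    exact (algebraMap K A).injective.comp (IsFractionRing.injective ↥O K)
  have hyint : IsIntegral ↥O y' := ⟨F, hFmonic, by rwa [Polynomial.aeval_def] at hFroot⟩
  set G : Polynomial ↥O := minpoly ↥O y' with hG
  have hGmonic : G.Monic := minpoly.monic hyint
  have hGdvd : G ∣ F := minpoly.isIntegrallyClosed_dvd hyint hFroot
  set d := G.natDegree with hd
  have hd1 : 0 < d := minpoly.natDegree_pos hyint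
  have hyintK : IsIntegral K y' := hyint.tower_top
  have hdlt : d < p := by
    have heq : minpoly K y' = G.map (algebraMap ↥O K) :=
      minpoly.isIntegrallyClosed_eq_field_fractions K A hyint
    have hdeg : (minpoly K y').natDegree = d := by
      rw [heq, hGmonic.natDegree_map]
    have hmem : y' ∈ L := y.2
    have hle : K⟮y'⟯ ≤ L := by
      rw [IntermediateField.adjoin_le_iff]
      simpa using hmem
    have hrank : Module.finrank K K⟮y'⟯ = (minpoly K y').natDegree :=
      IntermediateField.adjoin.finrank hyintK
    have hle2 : Module.finrank K K⟮y'⟯ ≤ Module.finrank K ↥L := by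
      have hinj : Function.Injective (IntermediateField.inclusion hle).toLinearMap :=
        (IntermediateField.inclusion hle).toRingHom.injective
      exact LinearMap.finrank_le_finrank_of_injective hinj
    omega
  -- residue field side
  have haker : ρ ⟨a, haO⟩ = 0 := by
    rw [hρ]
    exact Ideal.Quotient.eq_zero_iff_mem.mpr ((O.valuation_lt_one_iff ⟨a, haO⟩).mpr ha)
  set kbar := AlgebraicClosure k with hkbar
  set ψ : k →+* kbar := algebraMap k kbar with hψ
  haveI : CharP kbar p := charP_of_injective_algebraMap (algebraMap k kbar).injective p
  obtain ⟨s, hs⟩ := IsAlgClosed.exists_pow_nat_eq (ψ (ρ ⟨t, ht⟩)) hppos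
  set φ : ↥O →+* kbar := ψ.comp ρ with hφ
  have hFmap : F.map φ = (Polynomial.X - Polynomial.C s) ^ p := by
    have h1 : F.map φ = Polynomial.X ^ p - Polynomial.C (φ ⟨t, ht⟩) := by
      simp [hF, Polynomial.map_sub, Polynomial.map_pow, Polynomial.map_mul, hφ,
        RingHom.comp_apply, haker]
    rw [h1, sub_pow_char]
    congr 1
    rw [← Polynomial.C_pow, hs]
    rfl
  have hGmapdvd : G.map φ ∣ (Polynomial.X - Polynomial.C s) ^ p := by
    rw [← hFmap]
    exact Polynomial.map_dvd φ hGdvd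
  obtain ⟨i, hip, hassoc⟩ := (dvd_prime_pow (Polynomial.prime_X_sub_C s) p).mp hGmapdvd
  have hGeq : G.map φ = (Polynomial.X - Polynomial.C s) ^ i :=
    Polynomial.eq_of_monic_of_associated (hGmonic.map φ)
      ((Polynomial.monic_X_sub_C s).pow i) hassoc
  have hideg : i = d := by
    have h2 := congrArg Polynomial.natDegree hGeq
    rwa [hGmonic.natDegree_map, Polynomial.natDegree_pow,
      Polynomial.natDegree_X_sub_C, mul_one, eq_comm] at h2
  -- the constant coefficient of G maps to (-s)^d
  have hconst : φ (G.coeff 0) = (-s) ^ d := by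
    have h3 : (G.map φ).coeff 0 = (-s) ^ d := by
      rw [hGeq, hideg, Polynomial.coeff_zero_eq_eval_zero]
      simp [sub_eq_neg_add]
    rw [← h3, Polynomial.coeff_map]
  set R := ψ.fieldRange with hR
  have hsd : s ^ d ∈ R := by
    have h1 : (-s) ^ d ∈ R := ⟨ρ (G.coeff 0), hconst⟩
    have h2 : ((-1 : kbar)) ^ d ∈ R := pow_mem (neg_mem (one_mem R)) d
    have h4 : s ^ d = (-1 : kbar) ^ d * (-s) ^ d := by
      rw [← mul_pow, neg_one_mul, neg_neg]
    rw [h4]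
    exact mul_mem h2 h1
  have hsp : s ^ p ∈ R := ⟨ρ ⟨t, ht⟩, hs.symm⟩
  have hs0 : s ≠ 0 := by
    intro h0
    apply htp 0
    have h5 : ψ (ρ ⟨t, ht⟩) = ψ 0 := by rw [← hs, h0, zero_pow hppos.ne', map_zero]
    have h6 : ρ ⟨t, ht⟩ = 0 := ψ.injective h5
    rw [zero_pow hppos.ne', h6]
  have hcop : Nat.gcd d p = 1 :=
    (Nat.Prime.coprime_iff_not_dvd hp).mpr
      (fun hdvd => absurd (Nat.le_of_dvd hd1 hdvd) (not_le.mpr hdlt)) |>.symm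
  set u := Nat.gcdA d p with hu
  set v := Nat.gcdB d p with hv
  have hbez : (1 : ℤ) = d * u + p * v := by
    have h7 := Nat.gcd_eq_gcd_ab d p
    rw [hcop] at h7
    exact_mod_cast h7
  have hsmem : s ∈ R := by
    have h8 : s = (s ^ d) ^ u * (s ^ p) ^ v := by
      rw [← zpow_natCast s d, ← zpow_natCast s p, ← zpow_mul, ← zpow_mul,
        ← zpow_add₀ hs0, ← hbez, zpow_one]
    rw [h8]
    exact mul_mem (zpow_mem hsd u) (zpow_mem hsp v)
  obtain ⟨r, hr⟩ := hsmem
  apply htp r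
  apply ψ.injective
  rw [map_pow, hr, hs]
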